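/- Let k be a field of characteristic p > 0, let R be an ℕ^n-graded finitely generated k-algebra that is graded local with homogeneous maximal ideal 𝔪, let I be an 𝔪-primary homogeneous ideal generated by homogeneous elements each of degree at most δ ∈ ℕ^n (coordinatewise), and let s ≥ 1 be a real number. If x ∈ R is a homogeneous element with deg x ≠ (0,…,0) and deg x ≥ s·δ (coordinatewise), then x belongs to the weak s-closure of I. -/

import Mathlib

open Pointwise

/-- `R°`: the set of elements of `R` not contained in any minimal prime of `R`. -/
def RCirc (R : Type*) [CommRing R] : Set R :=
  {c | ∀ P ∈ minimalPrimes R, c ∉ P}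

/-- The `q`-th Frobenius power `I^[q]` of an ideal `I`, generated by `q`-th powers
of elements of `I`. -/
def frobPow {R : Type*} [CommRing R] (I : Ideal R) (q : ℕ) : Ideal R :=
  Ideal.span ((fun f => f ^ q) '' (I : Set R))

/-- The `(s,q)` mixed power `I^(s,q) = I^⌈sq⌉ + I^[q]`. -/
noncomputable def mixedPow {R : Type*} [CommRing R] (I : Ideal R) (s : ℝ) (q : ℕ) : Ideal R :=
  I ^ ⌈s * (q : ℝ)⌉₊ + frobPow I q

/-- The weak `s`-closure of `I`: elements `x` such that there is `c ∈ R°` with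
`c·x^q ∈ I^(s,q)` for all sufficiently large powers `q = p^e` of `p`. -/
def weakCl {R : Type*} [CommRing R] (p : ℕ) (I : Ideal R) (s : ℝ) : Set R :=
  {x | ∃ c ∈ RCirc R, ∃ N : ℕ, ∀ e : ℕ, N ≤ e → c * x ^ p ^ e ∈ mixedPow I s (p ^ e)}

/-- The tight closure `I*` of `I`. -/
def tightCl {R : Type*} [CommRing R] (p : ℕ) (I : Ideal R) : Set R :=
  {x | ∃ c ∈ RCirc R, ∃ N : ℕ, ∀ e : ℕ, N ≤ e → c * x ^ p ^ e ∈ frobPow I (p ^ e)}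

/-- The integral closure of `I`: elements `x` such that there is `c ∈ R°` with
`c·x^n ∈ I^n` for all sufficiently large `n`. -/
def intCl {R : Type*} [CommRing R] (I : Ideal R) : Set R :=
  {x | ∃ c ∈ RCirc R, ∃ N : ℕ, ∀ n : ℕ, N ≤ n → c * x ^ n ∈ I ^ n}

/-- The `α`-th rational power `I_α` of `I`, for rational `α = a/b ≥ 0`:
elements `x` with `x^b` in the integral closure of `I^a`. -/
noncomputable def ratPow {R : Type*} [CommRing R] (I : Ideal R) (α : ℚ) : Set R :=
  {x | x ^ α.den ∈ intCl (I ^ α.num.toNat)}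

/-- `μ(I)`: the minimal number of generators of `I`. -/
noncomputable def mu {R : Type*} [CommRing R] (I : Ideal R) : ℕ :=
  sInf {m : ℕ | ∃ s : Finset R, s.card = m ∧ Ideal.span (s : Set R) = I}

/-- An ideal has positive height if it is not contained in any minimal prime. -/
def PosHeight {R : Type*} [CommRing R] (I : Ideal R) : Prop :=
  ∀ P ∈ minimalPrimes R, ¬ I ≤ P

private def cdiv (D a : ℕ) : ℕ := (a + (D - 1)) / D

private lemma cdiv_le_mul (D a : ℕ) (hD : 1 ≤ D) : a ≤ D * cdiv D a := by
  have h1 := Nat.div_add_mod (a + (D - 1)) D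
  have h2 := Nat.mod_lt (a + (D - 1)) (show 0 < D by omega)
  unfold cdiv
  omega

private lemma cdiv_add (D a b : ℕ) (hD : 1 ≤ D) : cdiv D (a + b) ≤ cdiv D a + cdiv D b := by
  have h1 := cdiv_le_mul D a hD
  have h2 := cdiv_le_mul D b hD
  unfold cdiv at *
  rw [Nat.div_le_iff_le_mul_add_pred (by omega : 0 < D)]
  nlinarith

private lemma le_cdiv (D a t : ℕ) (hD : 1 ≤ D) (h : t * D ≤ a) : t ≤ cdiv D a := by
  unfold cdiv
  rw [Nat.le_div_iff_mul_le (by omega : 0 < D)]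
  omega

private lemma cdiv_zero' (D : ℕ) (hD : 1 ≤ D) : cdiv D 0 = 0 := by
  unfold cdiv
  exact Nat.div_eq_of_lt (by omega)

private lemma cdiv_le_one (D a : ℕ) (hD : 1 ≤ D) (h : a ≤ D) : cdiv D a ≤ 1 := by
  unfold cdiv
  rw [Nat.div_le_iff_le_mul_add_pred (by omega : 0 < D)]
  omega

section Aux

variable {R : Type*} {n : ℕ} {k : Type*} [Field k] [CommRing R] [Algebra k R]
  (𝒜 : (Fin n → ℕ) → Submodule k R) [GradedAlgebra 𝒜]

private lemma aux_proj_mul_zero {f : R} {d : Fin n → ℕ} (hf : f ∈ 𝒜 d) (g : Fin n → ℕ)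
    (hdg : ¬ d ≤ g) (r : R) : GradedRing.proj 𝒜 g (r * f) = 0 := by
  classical
  conv_lhs => rw [← DirectSum.sum_support_decompose 𝒜 r, Finset.sum_mul]
  rw [map_sum]
  refine Finset.sum_eq_zero fun h _ => ?_
  have hm : (DirectSum.decompose 𝒜 r h : R) * f ∈ 𝒜 (h + d) :=
    SetLike.mul_mem_graded (SetLike.coe_mem _) hf
  rw [GradedRing.proj_apply, DirectSum.decompose_of_mem_ne 𝒜 hm]
  intro hgeq
  exact hdg fun i => hgeq ▸ (by simp : d i ≤ (h + d) i)

private lemma aux_mem_max (𝔪 : Ideal R) (h𝔪hom : 𝔪.IsHomogeneous 𝒜) (h𝔪max : 𝔪.IsMaximal)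
    {g : Fin n → ℕ} (hg : g ≠ 0) {y : R} (hy : y ∈ 𝒜 g) : y ∈ 𝔪 := by
  by_contra hym
  obtain ⟨z, m, hm, hzm⟩ := h𝔪max.exists_inv hym
  have h0 : GradedRing.proj 𝒜 0 (z * y) = 0 :=
    aux_proj_mul_zero 𝒜 hy 0 (fun hle => hg (funext fun i => Nat.le_zero.mp (hle i))) z
  have h1 : GradedRing.proj 𝒜 0 (z * y + m) = GradedRing.proj 𝒜 0 1 := by rw [hzm]
  have hone : GradedRing.proj 𝒜 0 (1 : R) = 1 := by
    rw [GradedRing.proj_apply, DirectSum.decompose_of_mem_same 𝒜 (SetLike.one_mem_graded 𝒜)]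
  rw [map_add, h0, zero_add, hone] at h1
  have hmem : (1 : R) ∈ 𝔪 := by
    have := h𝔪hom 0 hm
    rwa [← GradedRing.proj_apply, h1] at this
  exact h𝔪max.ne_top ((Ideal.eq_top_iff_one 𝔪).mpr hmem)

private lemma aux_deg_pow_core (𝔪 : Ideal R)
    (h𝔪hom : 𝔪.IsHomogeneous 𝒜) (h𝔪max : 𝔪.IsMaximal) (T : Set R) (D : ℕ) (hD : 1 ≤ D)
    (hTh : ∀ w ∈ T, ∃ h : Fin n → ℕ, w ∈ 𝒜 h ∧ ∑ i, h i ≤ D)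
    (hTgen : Algebra.adjoin k T = ⊤) :
    ∀ (g : Fin n → ℕ) (y : R), y ∈ 𝒜 g → ∀ t : ℕ, t * D ≤ ∑ i, g i → y ∈ 𝔪 ^ t := by
  classical
  have hclos : ∀ w ∈ Submonoid.closure T,
      ∃ h : Fin n → ℕ, w ∈ 𝒜 h ∧ w ∈ 𝔪 ^ cdiv D (∑ i, h i) := by
    intro w hw
    induction hw using Submonoid.closure_induction with
    | mem w hwT =>
      obtain ⟨h, hwh, hhD⟩ := hTh w hwT
      refine ⟨h, hwh, ?_⟩
      by_cases hh0 : h = 0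
      · have : cdiv D (∑ i, h i) = 0 := by
          subst hh0
          simpa using cdiv_zero' D hD
        rw [this, pow_zero, Ideal.one_eq_top]
        exact Submodule.mem_top
      · refine Ideal.pow_le_pow_right (cdiv_le_one D _ hD hhD) ?_
        rw [pow_one]
        exact aux_mem_max 𝒜 𝔪 h𝔪hom h𝔪max hh0 hwh
    | one =>
      refine ⟨0, SetLike.one_mem_graded 𝒜, ?_⟩
      have : cdiv D (∑ i, (0 : Fin n → ℕ) i) = 0 := by simpa using cdiv_zero' D hD
      rw [this, pow_zero, Ideal.one_eq_top]
      exact Submodule.mem_top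
    | mul w1 w2 hw1 hw2 ih1 ih2 =>
      obtain ⟨h1, hw1h, hw1m⟩ := ih1
      obtain ⟨h2, hw2h, hw2m⟩ := ih2
      refine ⟨h1 + h2, SetLike.mul_mem_graded hw1h hw2h, ?_⟩
      have hsum : ∑ i, (h1 + h2) i = (∑ i, h1 i) + ∑ i, h2 i := by
        simp [Finset.sum_add_distrib]
      have hle : cdiv D (∑ i, (h1 + h2) i) ≤ cdiv D (∑ i, h1 i) + cdiv D (∑ i, h2 i) := by
        rw [hsum]; exact cdiv_add D _ _ hD
      refine Ideal.pow_le_pow_right hle ?_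
      rw [pow_add]
      exact Ideal.mul_mem_mul hw1m hw2m
  intro g y hy t ht
  have hspan : y ∈ Submodule.span k (Submonoid.closure T : Set R) := by
    have h1 : y ∈ Subalgebra.toSubmodule (Algebra.adjoin k T) := by
      rw [hTgen]; exact Submodule.mem_top
    rwa [Algebra.adjoin_eq_span] at h1
  have hproj : ∀ (y' : R), y' ∈ Submodule.span k (Submonoid.closure T : Set R) →
      GradedRing.proj 𝒜 g y' ∈ 𝔪 ^ cdiv D (∑ i, g i) := by
    intro y' hy'
    induction hy' using Submodule.span_induction with
    | mem w hw =>
      obtain ⟨h, hwh, hwm⟩ := hclos w hw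
      by_cases hhg : h = g
      · subst hhg
        rwa [GradedRing.proj_apply, DirectSum.decompose_of_mem_same 𝒜 hwh]
      · rw [GradedRing.proj_apply, DirectSum.decompose_of_mem_ne 𝒜 hwh hhg]
        exact zero_mem _
    | zero => rw [map_zero]; exact zero_mem _
    | add u v hu hv ihu ihv => rw [map_add]; exact add_mem ihu ihv
    | smul a u hu ihu =>
      have hlin : GradedRing.proj 𝒜 g (a • u) = a • GradedRing.proj 𝒜 g u := by
        rw [GradedRing.proj_apply, GradedRing.proj_apply, DirectSum.decompose_smul]
        rfl
      rw [hlin, Algebra.smul_def]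
      exact Ideal.mul_mem_left _ _ ihu
  have hfin : y ∈ 𝔪 ^ cdiv D (∑ i, g i) := by
    have := hproj y hspan
    rwa [GradedRing.proj_apply, DirectSum.decompose_of_mem_same 𝒜 hy] at this
  exact Ideal.pow_le_pow_right (le_cdiv D _ t hD ht) hfin

private lemma aux_deg_pow (hfg : Algebra.FiniteType k R) (𝔪 : Ideal R)
    (h𝔪hom : 𝔪.IsHomogeneous 𝒜) (h𝔪max : 𝔪.IsMaximal) :
    ∃ D : ℕ, 1 ≤ D ∧ ∀ (g : Fin n → ℕ) (y : R), y ∈ 𝒜 g →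
      ∀ t : ℕ, t * D ≤ ∑ i, g i → y ∈ 𝔪 ^ t := by
  classical
  obtain ⟨S, hS⟩ := hfg.out
  refine ⟨1 + S.sup (fun y => (DirectSum.decompose 𝒜 y).support.sup fun h => ∑ i, h i),
    Nat.le_add_right 1 _, ?_⟩
  refine aux_deg_pow_core 𝒜 𝔪 h𝔪hom h𝔪max
    {w | ∃ h : Fin n → ℕ, w ∈ 𝒜 h ∧ ∑ i, h i ≤
      1 + S.sup (fun y => (DirectSum.decompose 𝒜 y).support.sup fun h => ∑ i, h i)}
    _ (Nat.le_add_right 1 _) (fun w hw => hw) ?_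
  rw [eq_top_iff, ← hS]
  refine Algebra.adjoin_le fun y hy => ?_
  have hy' : y = ∑ h ∈ (DirectSum.decompose 𝒜 y).support, (DirectSum.decompose 𝒜 y h : R) :=
    (DirectSum.sum_support_decompose 𝒜 y).symm
  rw [hy']
  refine Subalgebra.sum_mem _ fun h hh => Algebra.subset_adjoin ?_
  refine ⟨h, SetLike.coe_mem _, ?_⟩
  have h1 : ∑ i, h i ≤ (DirectSum.decompose 𝒜 y).support.sup fun h => ∑ i, h i :=
    Finset.le_sup (f := fun h : Fin n → ℕ => ∑ i, h i) hh
  have h2 : ((DirectSum.decompose 𝒜 y).support.sup fun h => ∑ i, h i) ≤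
      S.sup (fun y => (DirectSum.decompose 𝒜 y).support.sup fun h => ∑ i, h i) :=
    Finset.le_sup (f := fun y => (DirectSum.decompose 𝒜 y).support.sup fun h => ∑ i, h i) hy
  exact (h1.trans h2).trans (Nat.le_add_left _ 1)

end Aux

private lemma aux_ann {R : Type*} [CommRing R] (hNoeth : IsNoetherianRing R) (𝔪 : Ideal R)
    [𝔪.IsPrime] (hmin : 𝔪 ∈ minimalPrimes R) :
    ∃ (Na : ℕ) (u : R), u ∉ 𝔪 ∧ ∀ z ∈ 𝔪 ^ Na, u * z = 0 := by
  classical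
  set A := Localization 𝔪.primeCompl
  haveI : IsNoetherianRing A := IsLocalization.isNoetherianRing 𝔪.primeCompl A hNoeth
  obtain ⟨Na, hNa⟩ := IsNoetherianRing.isNilpotent_nilradical A
  have hmap : Ideal.map (algebraMap R A) 𝔪 ≤ nilradical A := by
    rw [Ideal.map_le_iff_le_comap]
    intro m hm
    have hnu : ¬ IsUnit (algebraMap R A m) := by
      rw [IsLocalization.AtPrime.isUnit_to_map_iff A 𝔪 m]
      exact fun h => h hm
    have hmx : algebraMap R A m ∈ IsLocalRing.maximalIdeal A := hnu
    exact mem_nilradical.mpr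
      (by
        have : Ring.KrullDimLE 0 A := .of_isLocalization _ hmin _
        exact Ring.KrullDimLE.isNilpotent_iff_mem_maximalIdeal.mpr hmx)
  have h0 : ∀ z ∈ 𝔪 ^ Na, algebraMap R A z = 0 := by
    intro z hz
    have h1 : algebraMap R A z ∈ (Ideal.map (algebraMap R A) 𝔪) ^ Na := by
      rw [← Ideal.map_pow]
      exact Ideal.mem_map_of_mem _ hz
    have h3 := Ideal.pow_right_mono hmap Na h1
    rw [hNa] at h3
    simpa using h3
  obtain ⟨G, hG⟩ := (isNoetherianRing_iff_ideal_fg R).mp hNoeth (𝔪 ^ Na)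
  have hex : ∀ gi ∈ G, ∃ u : R, u ∈ 𝔪.primeCompl ∧ u * gi = 0 := by
    intro gi hgi
    have : algebraMap R A gi = 0 := h0 gi (by rw [← hG]; exact Ideal.subset_span hgi)
    obtain ⟨u, hu⟩ := (IsLocalization.map_eq_zero_iff 𝔪.primeCompl A gi).mp this
    exact ⟨u.1, u.2, hu⟩
  choose! u hu1 hu2 using hex
  refine ⟨Na, ∏ gi ∈ G, u gi, ?_, ?_⟩
  · exact Submonoid.prod_mem _ (fun gi hgi => hu1 gi hgi)
  · intro z hz
    rw [← hG] at hz
    induction hz using Submodule.span_induction with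
    | mem w hw =>
      rw [← Finset.mul_prod_erase _ u hw, mul_comm (u w), mul_assoc, hu2 w hw, mul_zero]
    | zero => rw [mul_zero]
    | add a b ha hb iha ihb => rw [mul_add, iha, ihb, add_zero]
    | smul r a ha iha => rw [smul_eq_mul, ← mul_assoc, mul_comm _ r, mul_assoc, iha, mul_zero]

/-- in an `ℕⁿ`-graded graded-local finitely generated algebra over a field `k`
of characteristic `p > 0`, with homogeneous maximal ideal `𝔪`, if `I` is an `𝔪`-primary
homogeneous ideal generated by homogeneous elements of degree at most `δ` coordinatewise,
and `x` is homogeneous with `deg x ≠ 0` and `deg x ≥ s·δ` coordinatewise, then `x` belongs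
to the weak `s`-closure of `I`. -/
theorem stmt9 {R : Type*} {n : ℕ} (k : Type*) [Field k] [CommRing R] [Algebra k R]
    (p : ℕ) (hp : p.Prime) (hcpk : CharP k p)
    (hfg : Algebra.FiniteType k R)
    (𝒜 : (Fin n → ℕ) → Submodule k R) [GradedAlgebra 𝒜]
    (𝔪 : Ideal R) (h𝔪hom : 𝔪.IsHomogeneous 𝒜) (h𝔪max : 𝔪.IsMaximal)
    (h𝔪uniq : ∀ 𝔪' : Ideal R, 𝔪'.IsHomogeneous 𝒜 → 𝔪'.IsMaximal → 𝔪' = 𝔪)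
    (I : Ideal R) (hIhom : I.IsHomogeneous 𝒜) (hIprim : I.radical = 𝔪)
    (δ : Fin n → ℕ)
    (hIgen : ∃ S : Set R, Ideal.span S = I ∧
      ∀ f ∈ S, ∃ g : Fin n → ℕ, f ∈ 𝒜 g ∧ ∀ i, g i ≤ δ i)
    (s : ℝ) (hs : 1 ≤ s)
    (x : R) (gx : Fin n → ℕ) (hx : x ∈ 𝒜 gx) (hgx0 : gx ≠ 0)
    (hdeg : ∀ i, s * (δ i : ℝ) ≤ (gx i : ℝ)) :
    x ∈ weakCl p I s := by
  classical
  obtain ⟨S, hSspan, hSdeg⟩ := hIgen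
  haveI := hfg
  have hNoeth : IsNoetherianRing R := Algebra.FiniteType.isNoetherianRing k R
  haveI := hNoeth
  obtain ⟨D, hD1, hE⟩ := aux_deg_pow 𝒜 hfg 𝔪 h𝔪hom h𝔪max
  obtain ⟨t₀, ht₀⟩ := Ideal.exists_pow_le_of_le_radical_of_fg (le_of_eq hIprim.symm)
      ((isNoetherianRing_iff_ideal_fg R).mp hNoeth 𝔪)
  set Δ := ∑ i, δ i with hΔdef
  set Γ := ∑ i, gx i with hΓdef
  have hΓ1 : 1 ≤ Γ := by
    obtain ⟨i, hi⟩ := Function.ne_iff.mp hgx0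
    have h1 : 1 ≤ gx i := by
      have : gx i ≠ 0 := hi
      omega
    exact h1.trans (Finset.single_le_sum (fun _ _ => Nat.zero_le _) (Finset.mem_univ i))
  set C := t₀ * D with hCdef
  have hbase : ∀ (g : Fin n → ℕ) (y : R), y ∈ 𝒜 g → C ≤ ∑ i, g i → y ∈ I :=
    fun g y hy hC => ht₀ (hE g y hy t₀ hC)
  -- main graded estimate
  have hD' : ∀ (m : ℕ) (g : Fin n → ℕ) (y : R), y ∈ 𝒜 g → C + m * Δ ≤ ∑ i, g i →
      y ∈ I ^ (m + 1) := by
    intro m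
    induction m with
    | zero =>
      intro g y hy h
      rw [pow_one]
      exact hbase g y hy (by simpa using h)
    | succ m ih =>
      intro g y hy hsum
      obtain ⟨Q, hQ⟩ : ∃ Q, m * Δ = Q := ⟨_, rfl⟩
      have hsum' : C + (Q + Δ) ≤ ∑ i, g i := by
        rw [← hQ, ← Nat.succ_mul]
        exact hsum
      have hyI : y ∈ I := hbase g y hy (by omega)
      have hyS : y ∈ Submodule.span R S := by rw [← hSspan] at hyI; exact hyI
      obtain ⟨cf, hsupp, hsumcf⟩ := Submodule.mem_span_set.mp hyS
      have hyproj : y = ∑ f ∈ cf.support, GradedRing.proj 𝒜 g (cf f • f) := by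
        conv_lhs => rw [← DirectSum.decompose_of_mem_same 𝒜 hy, ← GradedRing.proj_apply,
          ← hsumcf]
        rw [Finsupp.sum, map_sum]
      rw [hyproj]
      refine Ideal.sum_mem _ fun f hf => ?_
      obtain ⟨d, hfd, hdδ⟩ := hSdeg f (hsupp hf)
      rw [smul_eq_mul]
      by_cases hdg : d ≤ g
      · have hgeq : g - d + d = g := by funext i; exact Nat.sub_add_cancel (hdg i)
        have hproj : GradedRing.proj 𝒜 g (cf f * f) =
            (DirectSum.decompose 𝒜 (cf f) (g - d) : R) * f := by
          conv_lhs => rw [GradedRing.proj_apply, ← hgeq]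
          exact DirectSum.coe_decompose_mul_add_of_right_mem 𝒜 hfd
        rw [hproj]
        have hsum2 : (∑ i, (g - d) i) + ∑ i, d i = ∑ i, g i := by
          rw [← Finset.sum_add_distrib]
          exact Finset.sum_congr rfl fun i _ => Nat.sub_add_cancel (hdg i)
        have hdΔ : ∑ i, d i ≤ Δ := Finset.sum_le_sum fun i _ => hdδ i
        have hr' : (DirectSum.decompose 𝒜 (cf f) (g - d) : R) ∈ I ^ (m + 1) :=
          ih (g - d) _ (SetLike.coe_mem _) (by omega)
        have hfI : f ∈ I := by rw [← hSspan]; exact Ideal.subset_span (hsupp hf)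
        have hmm := Ideal.mul_mem_mul hr' hfI
        rwa [← pow_succ] at hmm
      · rw [aux_proj_mul_zero 𝒜 hfd g hdg (cf f)]
        exact zero_mem _
  -- x is in 𝔪
  have hx𝔪 : x ∈ 𝔪 := aux_mem_max 𝒜 𝔪 h𝔪hom h𝔪max hgx0 hx
  -- annihilator ideal
  obtain ⟨K, Na, hkill, hKm⟩ : ∃ (K : Ideal R) (Na : ℕ),
      (∀ a ∈ K, ∀ z ∈ 𝔪 ^ Na, a * z = 0) ∧ (𝔪 ∈ minimalPrimes R → ¬ K ≤ 𝔪) := by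
    by_cases hmin : 𝔪 ∈ minimalPrimes R
    · haveI := h𝔪max.isPrime
      obtain ⟨Na, u, hu, hk⟩ := aux_ann hNoeth 𝔪 hmin
      refine ⟨Ideal.span {u}, Na, ?_, fun _ hle => hu (hle (Ideal.subset_span rfl))⟩
      intro a ha z hz
      obtain ⟨r, hr⟩ := Ideal.mem_span_singleton'.mp ha
      rw [← hr, mul_assoc, hk z hz, mul_zero]
    · exact ⟨⊥, 0, fun a ha => by simp [Ideal.mem_bot.mp ha], fun h => absurd h hmin⟩
  set CC := C + 1 with hCC
  set J : Ideal R := K ⊔ I ^ CC with hJ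
  have hJP : ∀ P ∈ minimalPrimes R, ¬ J ≤ P := by
    intro P hP hle
    haveI hPp : P.IsPrime := hP.1.1
    have hIP : I ≤ P :=
      (Ideal.IsPrime.pow_le_iff (by omega : CC ≠ 0)).mp (le_trans le_sup_right hle)
    have h𝔪P : 𝔪 ≤ P := by
      rw [← hIprim]
      exact le_trans (Ideal.radical_mono hIP) (le_of_eq hPp.radical)
    have hP𝔪 : P = 𝔪 := (h𝔪max.eq_of_le hPp.ne_top h𝔪P).symm
    exact hKm (hP𝔪 ▸ hP) (hP𝔪 ▸ le_trans le_sup_left hle)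
  have hfinite := minimalPrimes.finite_of_isNoetherianRing R
  obtain ⟨c, hcJ, hcP⟩ : ∃ c ∈ J, ∀ P ∈ minimalPrimes R, c ∉ P := by
    have hsub := Ideal.subset_union_prime (R := R) (ι := Ideal R) (s := hfinite.toFinset)
      (f := id) ⊥ ⊥ (fun P hPs _ _ => (hfinite.mem_toFinset.mp hPs).1.1) (I := J)
    by_contra hcon
    push_neg at hcon
    have hss : (J : Set R) ⊆ ⋃ P ∈ (hfinite.toFinset : Set (Ideal R)), ↑(id P : Ideal R) := by
      intro c hc
      obtain ⟨P, hP, hcP⟩ := hcon c hc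
      exact Set.mem_biUnion (hfinite.mem_toFinset.mpr hP) hcP
    obtain ⟨P, hPs, hle⟩ := hsub.mp hss
    exact hJP P (hfinite.mem_toFinset.mp hPs) hle
  obtain ⟨a, haK, b, hbI, hab⟩ := Submodule.mem_sup.mp hcJ
  refine ⟨c, fun P hP => hcP P hP, C + Na, ?_⟩
  intro e he
  set q := p ^ e with hq
  have hqe : C + Na ≤ q := le_trans he (le_of_lt (Nat.lt_pow_self (n := e) hp.one_lt))
  have hxq𝔪 : x ^ q ∈ 𝔪 ^ Na :=
    Ideal.pow_le_pow_right (by omega) (Ideal.pow_mem_pow hx𝔪 q)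
  have hax : a * x ^ q = 0 := hkill a haK _ hxq𝔪
  have hsum_deg : ∑ i, (q • gx) i = q * Γ := by
    rw [hΓdef, Finset.mul_sum]
    exact Finset.sum_congr rfl fun i _ => rfl
  set m := ⌈s * (q : ℝ)⌉₊ - (CC + 1) with hm
  have harith : C + m * Δ ≤ q * Γ := by
    rcases Nat.eq_zero_or_pos Δ with hΔ0 | hΔpos
    · rw [hΔ0, Nat.mul_zero, Nat.add_zero]
      have h2 : q * 1 ≤ q * Γ := Nat.mul_le_mul_left q hΓ1
      omega
    · by_cases hm0 : ⌈s * (q : ℝ)⌉₊ ≤ CC + 1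
      · have hmz : m = 0 := by omega
        rw [hmz, Nat.zero_mul, Nat.add_zero]
        have h2 : q * 1 ≤ q * Γ := Nat.mul_le_mul_left q hΓ1
        omega
      · push_neg at hm0
        have hq0 : (0:ℝ) ≤ s * (q : ℝ) := by
          have : (0:ℝ) ≤ s := le_trans zero_le_one hs
          positivity
        have hceil : (⌈s * (q:ℝ)⌉₊ : ℝ) < s * q + 1 := Nat.ceil_lt_add_one hq0
        have hmR : (m : ℝ) ≤ s * q - CC := by
          rw [hm]
          rw [Nat.cast_sub (by omega : CC + 1 ≤ ⌈s * (q:ℝ)⌉₊)]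
          push_cast
          linarith
        have hΔR : (1:ℝ) ≤ (Δ:ℝ) := by exact_mod_cast hΔpos
        have hsΔ : s * (Δ:ℝ) ≤ (Γ:ℝ) := by
          rw [hΔdef, hΓdef]
          push_cast
          rw [Finset.mul_sum]
          exact Finset.sum_le_sum fun i _ => hdeg i
        have hCR : (CC:ℝ) = (C:ℝ) + 1 := by rw [hCC]; push_cast; ring
        have hgoal : (C:ℝ) + (m:ℝ) * Δ ≤ (q:ℝ) * Γ := by
          have h1 : (m:ℝ) * Δ ≤ (s * q - CC) * Δ :=
            mul_le_mul_of_nonneg_right hmR (by linarith)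
          have h2 : (q:ℝ) * (s * Δ) ≤ (q:ℝ) * Γ :=
            mul_le_mul_of_nonneg_left hsΔ (by positivity)
          have h4 : (0:ℝ) ≤ (CC:ℝ) * ((Δ:ℝ) - 1) :=
            mul_nonneg (Nat.cast_nonneg CC) (by linarith)
          nlinarith
        have hcast : ((C + m * Δ : ℕ) : ℝ) ≤ ((q * Γ : ℕ) : ℝ) := by push_cast; linarith
        exact_mod_cast hcast
  have hxqI : x ^ q ∈ I ^ (m + 1) :=
    hD' m (q • gx) _ (SetLike.pow_mem_graded q hx) (by rw [hsum_deg]; exact harith)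
  have hbxq : b * x ^ q ∈ I ^ ⌈s * (q:ℝ)⌉₊ := by
    have h1 := Ideal.mul_mem_mul hbI hxqI
    rw [← pow_add] at h1
    exact Ideal.pow_le_pow_right (by omega : ⌈s * (q:ℝ)⌉₊ ≤ CC + (m + 1)) h1
  have hcq : c * x ^ q = a * x ^ q + b * x ^ q := by rw [← hab, add_mul]
  have hmx : mixedPow I s q = I ^ ⌈s * (q:ℝ)⌉₊ ⊔ frobPow I q := rfl
  show c * x ^ q ∈ mixedPow I s q
  rw [hcq, hax, zero_add, hmx]
  exact Submodule.mem_sup_left hbxq
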